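/- Let H be a separable complex Hilbert space and let x : ℤ → H be a Riesz basis for H. Then there exist constants 0 < A ≤ B such that for every f ∈ H, A·‖f‖² ≤ ∑_{n∈ℤ} ( |⟨f, x_{2n}⟩|² + |⟨f, x_{2n+1} − x_{2n}⟩|² ) ≤ B·‖f‖². -/

import Mathlib

noncomputable section
open scoped Classical

local notation "⟪" f ", " g "⟫" => @inner ℂ _ _ g f

private lemma sq_norm_sub_le (p q : ℂ) : ‖p - q‖ ^ 2 ≤ 2 * ‖p‖ ^ 2 + 2 * ‖q‖ ^ 2 := by
  have h := norm_sub_le p q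
  nlinarith [norm_nonneg (p - q), norm_nonneg p, norm_nonneg q, sq_nonneg (‖p‖ - ‖q‖)]

private lemma sq_norm_le (p q : ℂ) : ‖p‖ ^ 2 ≤ 2 * ‖p - q‖ ^ 2 + 2 * ‖q‖ ^ 2 := by
  have h : ‖p‖ ≤ ‖p - q‖ + ‖q‖ := by
    calc ‖p‖ = ‖p - q + q‖ := by ring_nf
    _ ≤ ‖p - q‖ + ‖q‖ := norm_add_le _ _
  nlinarith [norm_nonneg (p - q), norm_nonneg p, norm_nonneg q, sq_nonneg (‖p - q‖ - ‖q‖)]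


/-- A family `x : ι → H` is a Riesz basis for `H` if it is the image of a Hilbert
(orthonormal) basis of `H` under a continuous linear equivalence of `H`. -/
def IsRieszBasis {H : Type*} [NormedAddCommGroup H] [InnerProductSpace ℂ H]
    {ι : Type*} (x : ι → H) : Prop :=
  ∃ (e : HilbertBasis ι ℂ H) (T : H ≃L[ℂ] H), ∀ i, x i = T (e i)

/-- Families `x, y : ι → H` form a pair of dual Riesz bases: both are Riesz bases,
they are biorthogonal, and `∑ᵢ ⟨f, yᵢ⟩ xᵢ = f` for every `f` (inner product linear in
the first argument, conjugate-linear in the second). -/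
def IsDualRieszBasisPair {H : Type*} [NormedAddCommGroup H] [InnerProductSpace ℂ H]
    {ι : Type*} (x y : ι → H) : Prop :=
  IsRieszBasis x ∧ IsRieszBasis y ∧
    (∀ i j, ⟪x i, y j⟫ = if i = j then (1 : ℂ) else 0) ∧
    ∀ f : H, HasSum (fun i => ⟪f, y i⟫ • x i) f

theorem stmt10 {H : Type*} [NormedAddCommGroup H] [InnerProductSpace ℂ H]
    [CompleteSpace H] [TopologicalSpace.SeparableSpace H]
    (x : ℤ → H) (hx : IsRieszBasis x) :
    ∃ A B : ℝ, 0 < A ∧ A ≤ B ∧ ∀ f : H,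
      Summable (fun n : ℤ => ‖⟪f, x (2 * n)⟫‖ ^ 2 + ‖⟪f, x (2 * n + 1) - x (2 * n)⟫‖ ^ 2) ∧
      A * ‖f‖ ^ 2 ≤
        ∑' n : ℤ, (‖⟪f, x (2 * n)⟫‖ ^ 2 + ‖⟪f, x (2 * n + 1) - x (2 * n)⟫‖ ^ 2) ∧
      ∑' n : ℤ, (‖⟪f, x (2 * n)⟫‖ ^ 2 + ‖⟪f, x (2 * n + 1) - x (2 * n)⟫‖ ^ 2) ≤
        B * ‖f‖ ^ 2 := by
  obtain ⟨e, T, hxT⟩ := hx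
  set S : H →L[ℂ] H := (T : H →L[ℂ] H)
  set Sinv : H →L[ℂ] H := (T.symm : H →L[ℂ] H)
  set Tad : H →L[ℂ] H := ContinuousLinearMap.adjoint S
  set Tadinv : H →L[ℂ] H := ContinuousLinearMap.adjoint Sinv
  have hinvt : ∀ f : H, Tadinv (Tad f) = f := by
    intro f
    have : Tadinv.comp Tad = ContinuousLinearMap.adjoint (S.comp Sinv) :=
      (ContinuousLinearMap.adjoint_comp S Sinv).symm
    have h2 : S.comp Sinv = ContinuousLinearMap.id ℂ H := by
      ext w; simp [S, Sinv]
    have h3 : Tadinv.comp Tad = ContinuousLinearMap.id ℂ H := by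
      rw [this, h2]; exact ContinuousLinearMap.adjoint_id
    calc Tadinv (Tad f) = (Tadinv.comp Tad) f := rfl
    _ = f := by rw [h3]; rfl
  refine ⟨(3 * (‖Tadinv‖ + 1) ^ 2)⁻¹, 3 * (‖Tad‖ + 1) ^ 2, ?_, ?_, ?_⟩
  · positivity
  · have h1 : (1 : ℝ) ≤ (‖Tadinv‖ + 1) ^ 2 := by nlinarith [norm_nonneg Tadinv]
    have h2 : (1 : ℝ) ≤ (‖Tad‖ + 1) ^ 2 := by nlinarith [norm_nonneg Tad]
    have h3 : (3 * (‖Tadinv‖ + 1) ^ 2)⁻¹ ≤ 1 / 3 := by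
      rw [inv_eq_one_div]
      apply div_le_div_of_nonneg_left <;> nlinarith
    linarith
  intro f
  set g : H := Tad f with hg
  -- the coefficients
  set a : ℤ → ℂ := fun i => @inner ℂ _ _ (e i) g with ha
  have key : ∀ i, ⟪f, x i⟫ = a i := by
    intro i
    rw [hxT i, ha]
    exact (ContinuousLinearMap.adjoint_inner_right S (e i) f).symm
  set F : ℤ → ℝ := fun i => ‖a i‖ ^ 2 with hFdef
  -- Parseval
  have hF : HasSum F (‖g‖ ^ 2) := by
    have h := e.hasSum_inner_mul_inner g g
    have heq : (fun i => @inner ℂ _ _ g (e i) * @inner ℂ _ _ (e i) g)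
        = fun i => ((F i : ℝ) : ℂ) := by
      funext i
      rw [← inner_conj_symm (e i) g]
      simpa [hFdef, ha] using RCLike.conj_mul (a i)
    rw [heq, @inner_self_eq_norm_sq_to_K ℂ] at h
    simpa [← Complex.ofReal_pow] using h.mapL Complex.reCLM
  set u : ℤ → ℝ := fun n => F (2 * n) with hu'
  set v : ℤ → ℝ := fun n => F (2 * n + 1) with hv'
  set d : ℤ → ℝ := fun n => ‖a (2 * n + 1) - a (2 * n)‖ ^ 2 with hd'
  have hu : Summable u := hF.summable.comp_injective (fun m n h => by omega)
  have hv : Summable v := hF.summable.comp_injective (fun m n h => by omega)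
  have hdle : ∀ n, d n ≤ 2 * v n + 2 * u n := fun n => sq_norm_sub_le _ _
  have hvle : ∀ n, v n ≤ 2 * d n + 2 * u n := fun n => sq_norm_le _ _
  have hd : Summable d :=
    Summable.of_nonneg_of_le (fun n => sq_nonneg _) hdle ((hv.mul_left 2).add (hu.mul_left 2))
  -- splitting the Parseval sum into even and odd parts
  have hsplit : ∑' n, u n + ∑' n, v n = ‖g‖ ^ 2 := by
    set s : Set ℤ := {m | m % 2 = 0} with hs
    let eEven : ℤ ≃ s :=
      { toFun := fun n => ⟨2 * n, show (2 * n) % 2 = 0 by omega⟩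
        invFun := fun m => m.1 / 2
        left_inv := fun n => show (2 * n) / 2 = n by omega
        right_inv := fun m => Subtype.ext (by
          have h2 : (m : ℤ) % 2 = 0 := m.2
          show 2 * ((m : ℤ) / 2) = (m : ℤ)
          omega) }
    let eOdd : ℤ ≃ (sᶜ : Set ℤ) :=
      { toFun := fun n => ⟨2 * n + 1, show ¬ (2 * n + 1) % 2 = 0 by omega⟩
        invFun := fun m => m.1 / 2
        left_inv := fun n => show (2 * n + 1) / 2 = n by omega
        right_inv := fun m => Subtype.ext (by
          have h2 : ¬ (m : ℤ) % 2 = 0 := m.2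
          show 2 * ((m : ℤ) / 2) + 1 = (m : ℤ)
          omega) }
    have h1 : HasSum (F ∘ ((↑) : s → ℤ)) (∑' n, u n) := by
      apply (Equiv.hasSum_iff eEven).mp
      have : (F ∘ ((↑) : s → ℤ)) ∘ eEven = u := by funext n; rfl
      rw [this]
      exact hu.hasSum
    have h2 : HasSum (F ∘ ((↑) : (sᶜ : Set ℤ) → ℤ)) (∑' n, v n) := by
      apply (Equiv.hasSum_iff eOdd).mp
      have : (F ∘ ((↑) : (sᶜ : Set ℤ) → ℤ)) ∘ eOdd = v := by funext n; rfl
      rw [this]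
      exact hv.hasSum
    exact (hF.unique (h1.add_compl h2)).symm
  -- rewriting the target function
  have htarget : (fun n : ℤ => ‖⟪f, x (2 * n)⟫‖ ^ 2 + ‖⟪f, x (2 * n + 1) - x (2 * n)⟫‖ ^ 2)
      = fun n => u n + d n := by
    funext n
    have h1 : ⟪f, x (2 * n + 1) - x (2 * n)⟫ = a (2 * n + 1) - a (2 * n) := by
      rw [inner_sub_left, key, key]
    rw [key, h1]
  have hsum : Summable (fun n => u n + d n) := hu.add hd
  have htsum : ∑' n, (u n + d n) = ∑' n, u n + ∑' n, d n := Summable.tsum_add hu hd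
  -- tsum inequalities
  have hD : ∑' n, d n ≤ 2 * ∑' n, v n + 2 * ∑' n, u n := by
    calc ∑' n, d n ≤ ∑' n, (2 * v n + 2 * u n) :=
          Summable.tsum_le_tsum hdle hd ((hv.mul_left 2).add (hu.mul_left 2))
    _ = 2 * ∑' n, v n + 2 * ∑' n, u n := by
          rw [Summable.tsum_add (hv.mul_left 2) (hu.mul_left 2), tsum_mul_left, tsum_mul_left]
  have hV : ∑' n, v n ≤ 2 * ∑' n, d n + 2 * ∑' n, u n := by
    calc ∑' n, v n ≤ ∑' n, (2 * d n + 2 * u n) :=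
          Summable.tsum_le_tsum hvle hv ((hd.mul_left 2).add (hu.mul_left 2))
    _ = 2 * ∑' n, d n + 2 * ∑' n, u n := by
          rw [Summable.tsum_add (hd.mul_left 2) (hu.mul_left 2), tsum_mul_left, tsum_mul_left]
  have hUnn : 0 ≤ ∑' n, u n := tsum_nonneg fun n => sq_nonneg _
  have hVnn : 0 ≤ ∑' n, v n := tsum_nonneg fun n => sq_nonneg _
  have hDnn : 0 ≤ ∑' n, d n := tsum_nonneg fun n => sq_nonneg _
  -- norm comparisons
  have hgf : ‖g‖ ≤ ‖Tad‖ * ‖f‖ := Tad.le_opNorm f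
  have hfg : ‖f‖ ≤ ‖Tadinv‖ * ‖g‖ := by
    conv_lhs => rw [← hinvt f]
    exact Tadinv.le_opNorm g
  rw [htarget, htsum]
  refine ⟨hsum, ?_, ?_⟩
  · -- lower bound
    have h1 : ‖f‖ ^ 2 ≤ (‖Tadinv‖ + 1) ^ 2 * ‖g‖ ^ 2 := by
      nlinarith [norm_nonneg f, norm_nonneg g, norm_nonneg Tadinv]
    have h2 : ‖g‖ ^ 2 ≤ 3 * (∑' n, u n + ∑' n, d n) := by
      rw [← hsplit]; linarith
    rw [inv_mul_le_iff₀ (by positivity)]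
    calc ‖f‖ ^ 2 ≤ (‖Tadinv‖ + 1) ^ 2 * ‖g‖ ^ 2 := h1
    _ ≤ (‖Tadinv‖ + 1) ^ 2 * (3 * (∑' n, u n + ∑' n, d n)) := by
        apply mul_le_mul_of_nonneg_left h2; positivity
    _ = 3 * (‖Tadinv‖ + 1) ^ 2 * (∑' n, u n + ∑' n, d n) := by ring
  · -- upper bound
    have h2 : ∑' n, u n + ∑' n, d n ≤ 3 * ‖g‖ ^ 2 := by
      rw [← hsplit]; linarith
    have h1 : ‖g‖ ^ 2 ≤ (‖Tad‖ + 1) ^ 2 * ‖f‖ ^ 2 := by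
      nlinarith [norm_nonneg f, norm_nonneg g, norm_nonneg Tad]
    calc ∑' n, u n + ∑' n, d n ≤ 3 * ‖g‖ ^ 2 := h2
    _ ≤ 3 * ((‖Tad‖ + 1) ^ 2 * ‖f‖ ^ 2) := by linarith
    _ = 3 * (‖Tad‖ + 1) ^ 2 * ‖f‖ ^ 2 := by ring
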